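/- arXiv:2105.02074 — 2 statements merged into one kernel-verified Lean document; each statement's English description precedes it below -/
import Mathlib

section
/- Let A and B be nonzero positive semidefinite d×d complex matrices. Then tr(√A √B) ≥ tr(AB) / √(tr(A) · tr(B)), where all the traces appearing are nonnegative real numbers. Equality holds if and only if tr(AB) = 0, or both A and B have matrix rank one. -/
open Matrix BigOperators Finset
open scoped ComplexOrder

/-- `Matrix.PosSemidef.sqrt` was removed from Mathlib; restored with its old definition. -/
noncomputable def Matrix.PosSemidef.sqrt {n 𝕜 : Type*} [Fintype n] [RCLike 𝕜] [DecidableEq n]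
    {A : Matrix n n 𝕜} (hA : A.PosSemidef) : Matrix n n 𝕜 :=
  hA.1.eigenvectorUnitary.1 * diagonal ((↑) ∘ (√·) ∘ hA.1.eigenvalues) *
    (star hA.1.eigenvectorUnitary : Matrix n n 𝕜)

namespace SqrtTraceAux

variable {d : ℕ}

lemma trace_conj_conj (U D V E : Matrix (Fin d) (Fin d) ℂ) :
    (U * D * star U * (V * E * star V)).trace
      = (D * (star U * V) * E * star (star U * V)).trace := by
  rw [StarMul.star_mul, star_star]
  rw [show U * D * star U * (V * E * star V) = U * (D * (star U * V) * E * star V) by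
    simp only [Matrix.mul_assoc]]
  rw [Matrix.trace_mul_comm]
  simp only [Matrix.mul_assoc]

lemma trace_diag_mul_diag (W : Matrix (Fin d) (Fin d) ℂ) (f g : Fin d → ℝ) :
    (Matrix.diagonal (RCLike.ofReal ∘ f) * W * Matrix.diagonal (RCLike.ofReal ∘ g) * star W).trace
      = ((∑ i, ∑ j, f i * g j * Complex.normSq (W i j) : ℝ) : ℂ) := by
  rw [Matrix.star_eq_conjTranspose]
  have hM : Matrix.diagonal (RCLike.ofReal ∘ f) * W * Matrix.diagonal (RCLike.ofReal ∘ g)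
      = Matrix.of (fun i j => (f i : ℂ) * W i j * (g j : ℂ)) := by
    ext i j
    simp [Matrix.mul_diagonal, Matrix.diagonal_mul]
  rw [hM]
  simp only [Matrix.trace, Matrix.diag, Matrix.mul_apply, Matrix.of_apply,
    Matrix.conjTranspose_apply]
  push_cast
  refine Finset.sum_congr rfl fun i _ => Finset.sum_congr rfl fun j _ => ?_
  have : (W i j) * star (W i j) = ((Complex.normSq (W i j) : ℝ) : ℂ) := by
    rw [Complex.star_def, Complex.mul_conj]
  calc (↑(f i) * W i j * ↑(g j)) * star (W i j)
      = (↑(f i) : ℂ) * ↑(g j) * (W i j * star (W i j)) := by ring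
    _ = _ := by rw [this]

lemma trace_conj_unitary (U : Matrix.unitaryGroup (Fin d) ℂ) (D : Matrix (Fin d) (Fin d) ℂ) :
    ((U : Matrix (Fin d) (Fin d) ℂ) * D * star (U : Matrix (Fin d) (Fin d) ℂ)).trace = D.trace := by
  rw [Matrix.trace_mul_cycle, Matrix.UnitaryGroup.star_mul_self, Matrix.one_mul]



lemma core {n : Type*} [Fintype n] [DecidableEq n] (μ ν : n → ℝ) (t : n → n → ℝ)
    (hμ : ∀ i, 0 ≤ μ i) (hν : ∀ i, 0 ≤ ν i) (ht : ∀ i j, 0 ≤ t i j)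
    (hM : 0 < ∑ i, μ i) (hN : 0 < ∑ i, ν i) :
    (∑ i, ∑ j, Real.sqrt (μ i) * Real.sqrt (ν j) * t i j)
        ≥ (∑ i, ∑ j, μ i * ν j * t i j) / Real.sqrt ((∑ i, μ i) * (∑ i, ν i)) ∧
    ((∑ i, ∑ j, Real.sqrt (μ i) * Real.sqrt (ν j) * t i j)
        = (∑ i, ∑ j, μ i * ν j * t i j) / Real.sqrt ((∑ i, μ i) * (∑ i, ν i))
      ↔ (∑ i, ∑ j, μ i * ν j * t i j) = 0 ∨
        ((∃ i, ∀ k, μ k ≠ 0 → k = i) ∧ (∃ j, ∀ k, ν k ≠ 0 → k = j))) := by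
  set M := ∑ i, μ i with hMdef
  set N := ∑ i, ν i with hNdef
  set S1 := ∑ i, ∑ j, Real.sqrt (μ i) * Real.sqrt (ν j) * t i j with hS1
  set S2 := ∑ i, ∑ j, μ i * ν j * t i j with hS2
  have hMN : 0 < Real.sqrt (M * N) := Real.sqrt_pos.mpr (mul_pos hM hN)
  have hle : ∀ i, μ i ≤ M := fun i => Finset.single_le_sum (fun k _ => hμ k) (mem_univ i)
  have hle' : ∀ j, ν j ≤ N := fun j => Finset.single_le_sum (fun k _ => hν k) (mem_univ j)
  have hsq : ∀ i j, Real.sqrt (μ i) * Real.sqrt (ν j) ≤ Real.sqrt (M * N) := by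
    intro i j
    rw [← Real.sqrt_mul (hμ i)]
    exact Real.sqrt_le_sqrt (mul_le_mul (hle i) (hle' j) (hν j) (le_of_lt hM))
  have key : ∀ i j, μ i * ν j * t i j
      ≤ Real.sqrt (M * N) * (Real.sqrt (μ i) * Real.sqrt (ν j) * t i j) := by
    intro i j
    have h1 : μ i * ν j * t i j
        = (Real.sqrt (μ i) * Real.sqrt (ν j)) * (Real.sqrt (μ i) * Real.sqrt (ν j) * t i j) := by
      rw [show (Real.sqrt (μ i) * Real.sqrt (ν j)) * (Real.sqrt (μ i) * Real.sqrt (ν j) * t i j)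
          = (Real.sqrt (μ i) * Real.sqrt (μ i)) * ((Real.sqrt (ν j) * Real.sqrt (ν j)) * t i j) by
        ring, Real.mul_self_sqrt (hμ i), Real.mul_self_sqrt (hν j)]
      ring
    rw [h1]
    exact mul_le_mul_of_nonneg_right (hsq i j)
      (mul_nonneg (mul_nonneg (Real.sqrt_nonneg _) (Real.sqrt_nonneg _)) (ht i j))
  have hS2le : S2 ≤ Real.sqrt (M * N) * S1 := by
    rw [hS2, hS1, Finset.mul_sum]
    refine Finset.sum_le_sum fun i _ => ?_
    rw [Finset.mul_sum]
    exact Finset.sum_le_sum fun j _ => key i j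
  have hineq : S1 ≥ S2 / Real.sqrt (M * N) := by
    rw [ge_iff_le, div_le_iff₀ hMN]
    linarith [hS2le]
  refine ⟨hineq, ?_⟩
  have heq1 : S1 = S2 / Real.sqrt (M * N) ↔ Real.sqrt (M * N) * S1 = S2 := by
    rw [eq_div_iff (ne_of_gt hMN)]
    constructor <;> intro h <;> linarith
  rw [heq1]
  have hdiff : Real.sqrt (M * N) * S1 - S2
      = ∑ i, ∑ j, (Real.sqrt (M * N) * (Real.sqrt (μ i) * Real.sqrt (ν j) * t i j)
          - μ i * ν j * t i j) := by
    rw [hS1, hS2, Finset.mul_sum, ← Finset.sum_sub_distrib]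
    refine Finset.sum_congr rfl fun i _ => ?_
    rw [Finset.mul_sum, ← Finset.sum_sub_distrib]
  have heq2 : Real.sqrt (M * N) * S1 = S2 ↔
      ∀ i j, Real.sqrt (M * N) * (Real.sqrt (μ i) * Real.sqrt (ν j) * t i j)
        = μ i * ν j * t i j := by
    constructor
    · intro h i j
      have hz : (∑ i, ∑ j, (Real.sqrt (M * N) * (Real.sqrt (μ i) * Real.sqrt (ν j) * t i j)
          - μ i * ν j * t i j)) = 0 := by rw [← hdiff]; linarith
      have hterm := (Finset.sum_eq_zero_iff_of_nonneg (fun i _ => Finset.sum_nonneg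
          (fun j _ => sub_nonneg.mpr (key i j)))).mp hz i (mem_univ i)
      have := (Finset.sum_eq_zero_iff_of_nonneg
          (fun j _ => sub_nonneg.mpr (key i j))).mp hterm j (mem_univ j)
      linarith
    · intro h
      have : Real.sqrt (M * N) * S1 - S2 = 0 := by
        rw [hdiff]
        exact Finset.sum_eq_zero fun i _ => Finset.sum_eq_zero fun j _ => by rw [h i j]; ring
      linarith
  rw [heq2]
  constructor
  · intro h
    by_cases hS20 : S2 = 0
    · exact Or.inl hS20
    · right
      -- find a nonzero term
      obtain ⟨i₀, -, hi₀⟩ := Finset.exists_ne_zero_of_sum_ne_zero (hS2 ▸ hS20)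
      obtain ⟨j₀, -, hj₀⟩ := Finset.exists_ne_zero_of_sum_ne_zero hi₀
      have hμ0 : 0 < μ i₀ := (hμ i₀).lt_of_ne fun h'' => hj₀ (by rw [← h'']; ring)
      have hν0 : 0 < ν j₀ := (hν j₀).lt_of_ne fun h'' => hj₀ (by rw [← h'']; ring)
      have ht0 : 0 < t i₀ j₀ := (ht i₀ j₀).lt_of_ne fun h'' => hj₀ (by rw [← h'']; ring)
      have hx : Real.sqrt (M * N) = Real.sqrt (μ i₀) * Real.sqrt (ν j₀) := by
        have h0 := h i₀ j₀
        have h1 : μ i₀ * ν j₀ * t i₀ j₀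
            = (Real.sqrt (μ i₀) * Real.sqrt (ν j₀)) * (Real.sqrt (μ i₀) * Real.sqrt (ν j₀) * t i₀ j₀) := by
          rw [show (Real.sqrt (μ i₀) * Real.sqrt (ν j₀)) * (Real.sqrt (μ i₀) * Real.sqrt (ν j₀) * t i₀ j₀)
              = (Real.sqrt (μ i₀) * Real.sqrt (μ i₀)) * ((Real.sqrt (ν j₀) * Real.sqrt (ν j₀)) * t i₀ j₀) by
            ring, Real.mul_self_sqrt (hμ i₀), Real.mul_self_sqrt (hν j₀)]
          ring
        have hpos : 0 < Real.sqrt (μ i₀) * Real.sqrt (ν j₀) * t i₀ j₀ := by positivity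
        rw [h1] at h0
        exact mul_right_cancel₀ (ne_of_gt hpos) h0
      have hMNeq : M * N = μ i₀ * ν j₀ := by
        have := congrArg (fun x => x ^ 2) hx
        simp only [Real.sq_sqrt (le_of_lt (mul_pos hM hN))] at this
        rw [this, mul_pow, Real.sq_sqrt (hμ i₀), Real.sq_sqrt (hν j₀)]
      have hμM : μ i₀ = M := by nlinarith [hle i₀, hle' j₀]
      have hνN : ν j₀ = N := by nlinarith [hle i₀, hle' j₀]
      have hrest : ∀ k, k ≠ i₀ → μ k = 0 := by
        intro k hk
        have hsum : ∑ l ∈ Finset.univ.erase i₀, μ l = 0 := by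
          have := Finset.add_sum_erase Finset.univ μ (mem_univ i₀)
          rw [← hMdef] at this
          linarith [hμM]
        exact (Finset.sum_eq_zero_iff_of_nonneg (fun l _ => hμ l)).mp hsum k
          (Finset.mem_erase.mpr ⟨hk, mem_univ k⟩)
      have hrest' : ∀ k, k ≠ j₀ → ν k = 0 := by
        intro k hk
        have hsum : ∑ l ∈ Finset.univ.erase j₀, ν l = 0 := by
          have := Finset.add_sum_erase Finset.univ ν (mem_univ j₀)
          rw [← hNdef] at this
          linarith [hνN]
        exact (Finset.sum_eq_zero_iff_of_nonneg (fun l _ => hν l)).mp hsum k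
          (Finset.mem_erase.mpr ⟨hk, mem_univ k⟩)
      exact ⟨⟨i₀, fun k hk => by_contra fun h' => hk (hrest k h')⟩,
        ⟨j₀, fun k hk => by_contra fun h' => hk (hrest' k h')⟩⟩
  · rintro (hS20 | ⟨⟨i₀, hi⟩, ⟨j₀, hj⟩⟩)
    · intro i j
      have hz := (Finset.sum_eq_zero_iff_of_nonneg (fun i _ => Finset.sum_nonneg
          (fun j _ => mul_nonneg (mul_nonneg (hμ i) (hν j)) (ht i j)))).mp hS20 i (mem_univ i)
      have hzz := (Finset.sum_eq_zero_iff_of_nonneg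
          (fun j _ => mul_nonneg (mul_nonneg (hμ i) (hν j)) (ht i j))).mp hz j (mem_univ j)
      rcases mul_eq_zero.mp hzz with h' | h'
      · rcases mul_eq_zero.mp h' with h'' | h''
        · rw [hzz, h'', Real.sqrt_zero]; ring
        · rw [hzz, h'', Real.sqrt_zero]; ring
      · rw [hzz, h']; ring
    · intro i j
      by_cases hiz : μ i = 0
      · rw [hiz, Real.sqrt_zero]; ring
      by_cases hjz : ν j = 0
      · rw [hjz, Real.sqrt_zero]; ring
      have hii : i = i₀ := hi i hiz
      have hjj : j = j₀ := hj j hjz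
      subst hii; subst hjj
      have hMeq : M = μ i := by
        rw [hMdef]
        exact Finset.sum_eq_single i (fun k _ hk => by_contra fun h' => hk (hi k h'))
          (fun h' => absurd (mem_univ i) h')
      have hNeq : N = ν j := by
        rw [hNdef]
        exact Finset.sum_eq_single j (fun k _ hk => by_contra fun h' => hk (hj k h'))
          (fun h' => absurd (mem_univ j) h')
      rw [hMeq, hNeq, Real.sqrt_mul (hμ i)]
      rw [show Real.sqrt (μ i) * Real.sqrt (ν j) * (Real.sqrt (μ i) * Real.sqrt (ν j) * t i j)
          = (Real.sqrt (μ i) * Real.sqrt (μ i)) * ((Real.sqrt (ν j) * Real.sqrt (ν j)) * t i j) by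
        ring, Real.mul_self_sqrt (hμ i), Real.mul_self_sqrt (hν j)]
      ring



lemma rank_one_iff {d : ℕ} {A : Matrix (Fin d) (Fin d) ℂ} (hA : A.IsHermitian)
    (h0 : ∃ i, hA.eigenvalues i ≠ 0) :
    A.rank = 1 ↔ ∃ i, ∀ k, hA.eigenvalues k ≠ 0 → k = i := by
  rw [hA.rank_eq_card_non_zero_eigs, Fintype.card_eq_one_iff]
  constructor
  · rintro ⟨⟨x, hx⟩, hall⟩
    exact ⟨x, fun k hk => congrArg Subtype.val (hall ⟨k, hk⟩)⟩
  · rintro ⟨i, hi⟩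
    obtain ⟨i₀, h₀⟩ := h0
    have hii : hA.eigenvalues i ≠ 0 := by rw [← hi i₀ h₀]; exact h₀
    exact ⟨⟨i, hii⟩, fun y => Subtype.ext (hi y.1 y.2)⟩

end SqrtTraceAux

/-- For nonzero positive semidefinite `d×d` complex matrices `A` and `B`,
`tr(√A √B) ≥ tr(AB) / √(tr A · tr B)`, with equality iff `tr(AB) = 0` or both `A` and `B`
have rank one. -/
theorem sqrt_trace_inequality
    (d : ℕ) (A B : Matrix (Fin d) (Fin d) ℂ)
    (hA : A.PosSemidef) (hB : B.PosSemidef)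
    (hA0 : A ≠ 0) (hB0 : B ≠ 0) :
    (hA.sqrt * hB.sqrt).trace.re ≥ (A * B).trace.re / Real.sqrt (A.trace.re * B.trace.re)
    ∧ ((hA.sqrt * hB.sqrt).trace.re = (A * B).trace.re / Real.sqrt (A.trace.re * B.trace.re)
        ↔ (A * B).trace = 0 ∨ (A.rank = 1 ∧ B.rank = 1)) := by
  classical
  have hU := hA.1.spectral_theorem
  have hV := hB.1.spectral_theorem
  rw [Unitary.conjStarAlgAut_apply] at hU hV
  set μ : Fin d → ℝ := hA.1.eigenvalues with hμdef
  set ν : Fin d → ℝ := hB.1.eigenvalues with hνdef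
  set W : Matrix (Fin d) (Fin d) ℂ :=
    star (hA.1.eigenvectorUnitary : Matrix (Fin d) (Fin d) ℂ) *
      (hB.1.eigenvectorUnitary : Matrix (Fin d) (Fin d) ℂ) with hWdef
  set t : Fin d → Fin d → ℝ := fun i j => Complex.normSq (W i j) with htdef
  have hμn : ∀ i, 0 ≤ μ i := fun i => hA.eigenvalues_nonneg i
  have hνn : ∀ i, 0 ≤ ν i := fun i => hB.eigenvalues_nonneg i
  have htn : ∀ i j, 0 ≤ t i j := fun i j => Complex.normSq_nonneg _
  -- traces
  have trA : A.trace = ((∑ i, μ i : ℝ) : ℂ) := by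
    conv_lhs => rw [hU]
    rw [SqrtTraceAux.trace_conj_unitary, Matrix.trace_diagonal]
    push_cast
    rfl
  have trB : B.trace = ((∑ i, ν i : ℝ) : ℂ) := by
    conv_lhs => rw [hV]
    rw [SqrtTraceAux.trace_conj_unitary, Matrix.trace_diagonal]
    push_cast
    rfl
  have trAB : (A * B).trace = ((∑ i, ∑ j, μ i * ν j * t i j : ℝ) : ℂ) := by
    conv_lhs => rw [hU, hV]
    rw [SqrtTraceAux.trace_conj_conj, SqrtTraceAux.trace_diag_mul_diag]
  have e1 : hA.sqrt = (hA.1.eigenvectorUnitary : Matrix (Fin d) (Fin d) ℂ) *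
      Matrix.diagonal (RCLike.ofReal ∘ (Real.sqrt ∘ μ)) *
      star (hA.1.eigenvectorUnitary : Matrix (Fin d) (Fin d) ℂ) := rfl
  have e2 : hB.sqrt = (hB.1.eigenvectorUnitary : Matrix (Fin d) (Fin d) ℂ) *
      Matrix.diagonal (RCLike.ofReal ∘ (Real.sqrt ∘ ν)) *
      star (hB.1.eigenvectorUnitary : Matrix (Fin d) (Fin d) ℂ) := rfl
  have trS : (hA.sqrt * hB.sqrt).trace
      = ((∑ i, ∑ j, Real.sqrt (μ i) * Real.sqrt (ν j) * t i j : ℝ) : ℂ) := by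
    rw [e1, e2, SqrtTraceAux.trace_conj_conj, SqrtTraceAux.trace_diag_mul_diag]
    norm_cast
  -- positivity of sums
  have hMpos : 0 < ∑ i, μ i := by
    have hex : ∃ i, μ i ≠ 0 := by
      by_contra h
      push_neg at h
      apply hA0
      rw [hU]
      have : (RCLike.ofReal ∘ μ : Fin d → ℂ) = fun _ => 0 := by
        funext i
        simp [h i]
      rw [this, Matrix.diagonal_zero, Matrix.mul_zero, Matrix.zero_mul]
    obtain ⟨i, hi⟩ := hex
    exact Finset.sum_pos' (fun k _ => hμn k) ⟨i, Finset.mem_univ i, (hμn i).lt_of_ne (Ne.symm hi)⟩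
  have hNpos : 0 < ∑ i, ν i := by
    have hex : ∃ i, ν i ≠ 0 := by
      by_contra h
      push_neg at h
      apply hB0
      rw [hV]
      have : (RCLike.ofReal ∘ ν : Fin d → ℂ) = fun _ => 0 := by
        funext i
        simp [h i]
      rw [this, Matrix.diagonal_zero, Matrix.mul_zero, Matrix.zero_mul]
    obtain ⟨i, hi⟩ := hex
    exact Finset.sum_pos' (fun k _ => hνn k) ⟨i, Finset.mem_univ i, (hνn i).lt_of_ne (Ne.symm hi)⟩
  have hexμ : ∃ i, μ i ≠ 0 := by
    by_contra h
    push_neg at h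
    rw [Finset.sum_eq_zero (fun i _ => h i)] at hMpos
    exact lt_irrefl 0 hMpos
  have hexν : ∃ i, ν i ≠ 0 := by
    by_contra h
    push_neg at h
    rw [Finset.sum_eq_zero (fun i _ => h i)] at hNpos
    exact lt_irrefl 0 hNpos
  obtain ⟨hine, heqiff⟩ := SqrtTraceAux.core μ ν t hμn hνn htn hMpos hNpos
  have hreS : (hA.sqrt * hB.sqrt).trace.re = ∑ i, ∑ j, Real.sqrt (μ i) * Real.sqrt (ν j) * t i j := by
    rw [trS, Complex.ofReal_re]
  have hreAB : (A * B).trace.re = ∑ i, ∑ j, μ i * ν j * t i j := by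
    rw [trAB, Complex.ofReal_re]
  have hreA : A.trace.re = ∑ i, μ i := by rw [trA, Complex.ofReal_re]
  have hreB : B.trace.re = ∑ i, ν i := by rw [trB, Complex.ofReal_re]
  rw [hreS, hreAB, hreA, hreB]
  refine ⟨hine, ?_⟩
  rw [heqiff]
  have h1 : (A * B).trace = 0 ↔ (∑ i, ∑ j, μ i * ν j * t i j) = 0 := by
    rw [trAB, Complex.ofReal_eq_zero]
  have h2 : A.rank = 1 ↔ ∃ i, ∀ k, μ k ≠ 0 → k = i := SqrtTraceAux.rank_one_iff hA.1 hexμ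
  have h3 : B.rank = 1 ↔ ∃ i, ∀ k, ν k ≠ 0 → k = i := SqrtTraceAux.rank_one_iff hB.1 hexν
  rw [h1, h2, h3]
end

section
/- Let d ≥ 2 and let {Π_i}_{i=1}^{d²} be rank-one orthogonal projections on ℂ^d with tr(Π_i Π_j) = 1/(d+1) for all i ≠ j and Σ_{i=1}^{d²} Π_i = d·I (a SIC). Define the reflected SIC effects E_i = (I − Π_i)/(d(d−1)). Then {E_i}_{i=1}^{d²} is a POVM, its measurement strength is R = d − (1/d) Σ_i (tr √E_i)² = 1, its orthogonality is O = Σ_{i,j} (tr(√E_i √E_j))² − 2d + d² = (2d⁴ − 4d³ − d² + 4d)/(d² − 1), and its disturbance is D = Σ_{l,m} (tr(√E_l √E_m))² − 2 Σ_l (tr √E_l)² + d² = d²/(d² − 1). -/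
open Matrix BigOperators
open scoped ComplexOrder

open scoped MatrixOrder in
lemma Matrix.PosSemidef.eq_sqrt_of_sq_eq {n : Type*} [Fintype n] [DecidableEq n]
    {B A : Matrix n n ℂ} (hB : B.PosSemidef) (hA : A.PosSemidef) (h : B ^ 2 = A) :
    B = hA.sqrt := by
  have h1 : hA.sqrt = cfc Real.sqrt A := by
    rw [hA.1.cfc_eq]
    rfl
  rw [h1, ← cfcₙ_eq_cfc, ← CFC.sqrt_eq_real_sqrt A hA.nonneg]
  exact (CFC.sqrt_unique (by rw [← h, pow_two]) hB.nonneg).symm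

lemma psd_smul' {n : Type*} [Fintype n] {A : Matrix n n ℂ} (hA : A.PosSemidef) {c : ℝ}
    (hc : 0 ≤ c) : ((c:ℂ) • A).PosSemidef := by
  constructor
  · have := hA.1
    unfold Matrix.IsHermitian at *
    rw [conjTranspose_smul, this]
    simp
  · intro x
    exact (hA.smul (a := (c:ℂ)) (by exact_mod_cast hc)).2 x

lemma sum_sum_ite' (n : ℕ) (a b : ℝ) :
    ∑ i : Fin n, ∑ j : Fin n, (if i = j then a else b) = (n:ℝ) * ((n:ℝ)*b + (a - b)) := by
  have h : ∀ i : Fin n, ∑ j : Fin n, (if i = j then a else b) = (n:ℝ)*b + (a-b) := by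
    intro i
    have h2 : ∀ j : Fin n, (if i = j then a else b) = b + (if i = j then (a-b) else 0) := by
      intro j; split <;> ring
    simp_rw [h2, Finset.sum_add_distrib, Finset.sum_const, Finset.sum_ite_eq, Finset.mem_univ,
      if_true, Finset.card_univ, Fintype.card_fin, nsmul_eq_mul]
  simp_rw [h, Finset.sum_const, Finset.card_univ, Fintype.card_fin, nsmul_eq_mul]

/-- For `d ≥ 2` and a SIC `{Π_i}_{i=1}^{d²}` (rank-one orthogonal projections
with `tr(Π_i Π_j) = 1/(d+1)` for `i ≠ j` and `Σ_i Π_i = d·I`), the reflected SIC effects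
`E_i = (I − Π_i)/(d(d−1))` form a POVM with measurement strength `R = 1`, orthogonality
`O = (2d⁴ − 4d³ − d² + 4d)/(d² − 1)`, and disturbance `D = d²/(d² − 1)`. -/
theorem reflected_sic_properties
    (d : ℕ) (hd : 2 ≤ d)
    (P : Fin (d ^ 2) → Matrix (Fin d) (Fin d) ℂ)
    (hproj : ∀ i, (P i).IsHermitian ∧ P i * P i = P i ∧ (P i).trace = 1)
    (hangle : ∀ i j, i ≠ j → (P i * P j).trace = (((((d : ℝ) + 1)⁻¹ : ℝ)) : ℂ))
    (hsumP : ∑ i, P i = (d : ℂ) • (1 : Matrix (Fin d) (Fin d) ℂ))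
    (E : Fin (d ^ 2) → Matrix (Fin d) (Fin d) ℂ)
    (hEdef : ∀ i, E i = ((d : ℂ) * ((d : ℂ) - 1))⁻¹ • ((1 : Matrix (Fin d) (Fin d) ℂ) - P i)) :
    (∀ i, (E i).PosSemidef) ∧ (∑ i, E i = 1) ∧
    ∀ hE : ∀ i, (E i).PosSemidef,
      ((d : ℝ) - (1 / (d : ℝ)) * ∑ i, (((hE i).sqrt).trace.re) ^ 2 = 1)
      ∧ (∑ i, ∑ j, (((hE i).sqrt * (hE j).sqrt).trace.re) ^ 2 - 2 * (d : ℝ) + (d : ℝ) ^ 2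
          = (2 * (d : ℝ) ^ 4 - 4 * (d : ℝ) ^ 3 - (d : ℝ) ^ 2 + 4 * (d : ℝ)) / ((d : ℝ) ^ 2 - 1))
      ∧ (∑ l, ∑ m, (((hE l).sqrt * (hE m).sqrt).trace.re) ^ 2
            - 2 * ∑ l, (((hE l).sqrt).trace.re) ^ 2 + (d : ℝ) ^ 2
          = (d : ℝ) ^ 2 / ((d : ℝ) ^ 2 - 1)) := by
  have hx2 : (2:ℝ) ≤ (d:ℝ) := by exact_mod_cast hd
  set x : ℝ := (d:ℝ) with hxdef
  have hx0 : (0:ℝ) < x := by linarith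
  have hx1 : (0:ℝ) < x - 1 := by linarith
  have hxp1 : (0:ℝ) < x + 1 := by linarith
  have hc0 : (0:ℝ) < (x*(x-1))⁻¹ := by positivity
  set s : ℝ := Real.sqrt ((x*(x-1))⁻¹) with hsdef
  have hs0 : 0 ≤ s := Real.sqrt_nonneg _
  have hs2 : s^2 = (x*(x-1))⁻¹ := Real.sq_sqrt hc0.le
  set Q : Fin (d^2) → Matrix (Fin d) (Fin d) ℂ := fun i => 1 - P i with hQdef
  have hQherm : ∀ i, (Q i).IsHermitian := fun i => (isHermitian_one).sub (hproj i).1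
  have hQidem : ∀ i, Q i * Q i = Q i := by
    intro i
    simp only [hQdef, mul_sub, sub_mul, one_mul, mul_one, (hproj i).2.1]
    abel
  have hQpsd : ∀ i, (Q i).PosSemidef := by
    intro i
    have h : Q i = (Q i)ᴴ * Q i := by rw [hQherm i, hQidem i]
    rw [h]; exact posSemidef_conjTranspose_mul_self _
  set B : Fin (d^2) → Matrix (Fin d) (Fin d) ℂ := fun i => (s:ℂ) • Q i with hBdef
  have hBpsd : ∀ i, (B i).PosSemidef := fun i => psd_smul' (hQpsd i) hs0
  have hcast : (((x*(x-1))⁻¹ : ℝ) : ℂ) = ((d:ℂ) * ((d:ℂ) - 1))⁻¹ := by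
    push_cast [hxdef]; ring
  have hB2 : ∀ i, B i ^ 2 = E i := by
    intro i
    rw [hEdef i, ← hcast, pow_two, hBdef]
    simp only [smul_mul_assoc, mul_smul_comm, smul_smul, hQidem i]
    rw [← Complex.ofReal_mul, ← pow_two, hs2]
  have hEpsd : ∀ i, (E i).PosSemidef := fun i => hB2 i ▸ (hBpsd i).pow 2
  have hd2 : ((d:ℂ) * ((d:ℂ) - 1)) ≠ 0 := by
    have hdn : d ≠ 0 := by omega
    have h1 : (d:ℂ) ≠ 0 := Nat.cast_ne_zero.mpr hdn
    have h2 : (d:ℂ) - 1 ≠ 0 := by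
      intro h
      have : (d:ℂ) = 1 := by linear_combination h
      have : (d:ℝ) = 1 := by exact_mod_cast this
      linarith
    exact mul_ne_zero h1 h2
  have hsum : ∑ i, E i = 1 := by
    simp_rw [hEdef]
    rw [← Finset.smul_sum, Finset.sum_sub_distrib, hsumP, Finset.sum_const, Finset.card_univ,
      Fintype.card_fin]
    rw [← Nat.cast_smul_eq_nsmul ℂ]
    rw [← sub_smul, smul_smul]
    have : ((d:ℂ) * ((d:ℂ) - 1))⁻¹ * ((d^2 : ℕ) - (d:ℂ)) = 1 := by
      rw [inv_mul_eq_one₀ hd2]; push_cast; ring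
    rw [this, one_smul]
  refine ⟨hEpsd, hsum, ?_⟩
  intro hE
  have hsqrt : ∀ i, (hE i).sqrt = B i := fun i =>
    ((hBpsd i).eq_sqrt_of_sq_eq (hE i) (hB2 i)).symm
  have htrQ : ∀ i, (Q i).trace = ((x - 1 : ℝ) : ℂ) := by
    intro i
    rw [hQdef]
    simp only [trace_sub, trace_one, (hproj i).2.2, Fintype.card_fin]
    push_cast [hxdef]; ring
  have htrB : ∀ i, ((hE i).sqrt).trace.re = s * (x - 1) := by
    intro i
    rw [hsqrt i, hBdef]
    simp only [trace_smul, htrQ i, smul_eq_mul, ← Complex.ofReal_mul, Complex.ofReal_re]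
  have htrBB : ∀ i j, ((hE i).sqrt * (hE j).sqrt).trace.re
      = if i = j then s^2 * (x-1) else s^2 * (x - 2 + (x+1)⁻¹) := by
    intro i j
    rw [hsqrt i, hsqrt j, hBdef]
    simp only [smul_mul_assoc, mul_smul_comm, smul_smul, trace_smul, smul_eq_mul]
    have hQQ : (Q i * Q j).trace = ((x:ℂ) - 2) + (P i * P j).trace := by
      simp only [hQdef, mul_sub, sub_mul, one_mul, mul_one]
      simp only [trace_sub, trace_add, trace_one, (hproj i).2.2, (hproj j).2.2, Fintype.card_fin]
      push_cast [hxdef]; ring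
    by_cases h : i = j
    · subst h
      rw [if_pos rfl, hQQ, (hproj i).2.1, (hproj i).2.2]
      have : (s:ℂ) * (s:ℂ) * (((x:ℂ) - 2) + 1) = (((s^2 * (x-1) : ℝ)) : ℂ) := by
        push_cast; ring
      rw [this, Complex.ofReal_re]
    · rw [if_neg h, hQQ, hangle i j h]
      have : (s:ℂ) * (s:ℂ) * (((x:ℂ) - 2) + (((x + 1)⁻¹ : ℝ) : ℂ))
          = (((s^2 * (x - 2 + (x+1)⁻¹) : ℝ)) : ℂ) := by
        push_cast; ring
      rw [this, Complex.ofReal_re]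
  have hsum1 : ∑ i : Fin (d^2), (((hE i).sqrt).trace.re)^2 = x^2 * (s*(x-1))^2 := by
    simp_rw [htrB, Finset.sum_const, Finset.card_univ, Fintype.card_fin, nsmul_eq_mul]
    push_cast [hxdef]; ring
  have hsum2 : ∑ i, ∑ j, (((hE i).sqrt * (hE j).sqrt).trace.re)^2
      = x^2 * (x^2 * (s^2*(x-2+(x+1)⁻¹))^2 + ((s^2*(x-1))^2 - (s^2*(x-2+(x+1)⁻¹))^2)) := by
    have h : ∀ i j, (((hE i).sqrt * (hE j).sqrt).trace.re)^2
        = if i = j then (s^2*(x-1))^2 else (s^2*(x-2+(x+1)⁻¹))^2 := by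
      intro i j; rw [htrBB i j]; split <;> rfl
    simp_rw [h]
    rw [sum_sum_ite']
    push_cast [hxdef]; ring
  have hx0' : x ≠ 0 := hx0.ne'
  have hx1' : x - 1 ≠ 0 := hx1.ne'
  have hxp1' : x + 1 ≠ 0 := hxp1.ne'
  have hx21 : x^2 - 1 ≠ 0 := by nlinarith
  have e1 : s^2*(x-1) = x⁻¹ := by rw [hs2]; field_simp
  have e2 : s^2*(x-2+(x+1)⁻¹) = (x^2-x-1)/(x*(x-1)*(x+1)) := by
    rw [hs2]; field_simp; ring
  have e3 : (s*(x-1))^2 = (x-1)/x := by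
    rw [mul_pow, hs2]; field_simp
  rw [hsum1, hsum2, e1, e2, e3] at *
  refine ⟨?_, ?_, ?_⟩
  · field_simp; ring
  · field_simp; ring
  · field_simp; ring
end
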